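/- If f : (a,b) → (0,∞) with 0 ≤ a < b is a continuous geometrically concave function, then the function h(x) = ∫_a^x f(t) dt is geometrically concave on (a,b). -/

import Mathlib

open Real Set intervalIntegral

set_option maxHeartbeats 1000000 in
lemma geom_key (a b : ℝ) (ha : 0 ≤ a) (f : ℝ → ℝ)
    (hpos : ∀ x ∈ Set.Ioo a b, 0 < f x)
    (hint : ∀ x ∈ Set.Ioo a b, IntervalIntegrable f MeasureTheory.volume a x)
    (hgc : ∀ x ∈ Set.Ioo a b, ∀ y ∈ Set.Ioo a b, ∀ l ∈ Set.Icc (0:ℝ) 1,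
      f (x ^ l * y ^ (1 - l)) ≥ f x ^ l * f y ^ (1 - l))
    {x y : ℝ} (hx : x ∈ Set.Ioo a b) (hy : y ∈ Set.Ioo a b) (hxy : x < y) :
    y * f y * (∫ t in a..x, f t) ≤ x * f x * (∫ t in a..y, f t) := by
  have hx0 : 0 < x := lt_of_le_of_lt ha hx.1
  have hy0 : 0 < y := lt_of_le_of_lt ha hy.1
  have hfx : 0 < f x := hpos x hx
  have hfy : 0 < f y := hpos y hy
  set lx := Real.log x with hlx
  set ly := Real.log y with hly
  set X := Real.log (f x) with hX
  set Y := Real.log (f y) with hY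
  have hlxy : lx < ly := Real.log_lt_log hx0 hxy
  have hd1 : (0:ℝ) < ly - lx := by linarith
  set k : ℝ := (X - Y) / (ly - lx) with hk
  set C : ℝ := f x * x ^ k with hC
  have hCpos : 0 < C := mul_pos hfx (Real.rpow_pos_of_pos hx0 k)
  set φ : ℝ → ℝ := fun t => C * t ^ (-k) with hφ
  have hφpos : ∀ t : ℝ, 0 < t → 0 < φ t := fun t ht =>
    mul_pos hCpos (Real.rpow_pos_of_pos ht _)
  have hlogφ : ∀ t : ℝ, 0 < t → Real.log (φ t) = X + k * (lx - Real.log t) := by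
    intro t ht
    rw [hφ]
    simp only
    rw [Real.log_mul hCpos.ne' (Real.rpow_pos_of_pos ht _).ne', hC,
      Real.log_mul hfx.ne' (Real.rpow_pos_of_pos hx0 _).ne',
      Real.log_rpow hx0, Real.log_rpow ht]
    ring
  have hφx : φ x = f x := by
    have h1 : Real.log (φ x) = Real.log (f x) := by
      rw [hlogφ x hx0]; simp [hlx, hX]
    have := congrArg Real.exp h1
    rwa [Real.exp_log (hφpos x hx0), Real.exp_log hfx] at this
  have hφy : φ y = f y := by
    have h1 : Real.log (φ y) = Real.log (f y) := by
      rw [hlogφ y hy0, hk, hX, hY, hlx, hly]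
      field_simp [show Real.log y - Real.log x ≠ 0 from hd1.ne']
      ring
    have := congrArg Real.exp h1
    rwa [Real.exp_log (hφpos y hy0), Real.exp_log hfy] at this
  -- pointwise bounds
  have bound1 : ∀ t ∈ Set.Ioo a x, f t ≤ φ t := by
    intro t ht
    have ht0 : 0 < t := lt_of_le_of_lt ha ht.1
    have htb : t ∈ Set.Ioo a b := ⟨ht.1, ht.2.trans hx.2⟩
    have hft : 0 < f t := hpos t htb
    have hltx : Real.log t < lx := Real.log_lt_log ht0 ht.2
    set lt' := Real.log t with hlt'
    have hd2 : (0:ℝ) < ly - lt' := by linarith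
    set μ := (ly - lx) / (ly - lt') with hμ
    have hμ0 : 0 < μ := div_pos hd1 hd2
    have hμ1 : μ ≤ 1 := (div_le_one hd2).mpr (by linarith)
    have hcomb : t ^ μ * y ^ (1 - μ) = x := by
      rw [Real.rpow_def_of_pos ht0, Real.rpow_def_of_pos hy0, ← Real.exp_add,
        ← Real.exp_log hx0]
      congr 1
      rw [hμ, hlx, hly, hlt']
      field_simp [show Real.log y - Real.log t ≠ 0 from hd2.ne']
      ring
    have hgc' := hgc t htb y hy μ ⟨hμ0.le, hμ1⟩
    rw [hcomb] at hgc'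
    have hlog : μ * Real.log (f t) + (1 - μ) * Y ≤ X := by
      have h2 : Real.log (f t ^ μ * f y ^ (1 - μ)) ≤ X :=
        Real.log_le_log (by positivity) hgc'
      rwa [Real.log_mul (by positivity) (by positivity), Real.log_rpow hft,
        Real.log_rpow hfy] at h2
    set A := Real.log (f t) with hA
    have h3 : (ly - lx) * A + ((ly - lt') - (ly - lx)) * Y ≤ (ly - lt') * X := by
      have h4 : (ly - lx) * A + ((ly - lt') - (ly - lx)) * Y
          = (μ * A + (1 - μ) * Y) * (ly - lt') := by
        rw [hμ, hlx, hly, hlt']; field_simp [show Real.log y - Real.log t ≠ 0 from hd2.ne']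
      rw [h4]
      calc (μ * A + (1 - μ) * Y) * (ly - lt') ≤ X * (ly - lt') :=
            mul_le_mul_of_nonneg_right hlog hd2.le
        _ = (ly - lt') * X := mul_comm _ _
    have key2 : (A - X) * (ly - lx) ≤ (X - Y) * (lx - lt') := by nlinarith [h3]
    have hgoal : A ≤ X + k * (lx - lt') := by
      rw [hk, div_mul_eq_mul_div, ← sub_le_iff_le_add', le_div_iff₀ hd1]
      exact key2
    have := Real.exp_le_exp.mpr hgoal
    rw [hA, hlt'] at this
    rwa [Real.exp_log hft, ← hlogφ t ht0, Real.exp_log (hφpos t ht0)] at this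
  have bound2 : ∀ t ∈ Set.Ioo x y, φ t ≤ f t := by
    intro t ht
    have ht0 : 0 < t := hx0.trans ht.1
    have htb : t ∈ Set.Ioo a b := ⟨hx.1.trans ht.1, ht.2.trans hy.2⟩
    have hft : 0 < f t := hpos t htb
    set lt' := Real.log t with hlt'
    have hl1 : lx < lt' := Real.log_lt_log hx0 ht.1
    have hl2 : lt' < ly := Real.log_lt_log ht0 ht.2
    set ν := (ly - lt') / (ly - lx) with hν
    have hν0 : 0 ≤ ν := div_nonneg (by linarith) (by linarith)
    have hν1 : ν ≤ 1 := (div_le_one hd1).mpr (by linarith)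
    have hcomb : x ^ ν * y ^ (1 - ν) = t := by
      rw [Real.rpow_def_of_pos hx0, Real.rpow_def_of_pos hy0, ← Real.exp_add,
        ← Real.exp_log ht0]
      congr 1
      rw [hν, hlx, hly, hlt']
      field_simp [show Real.log y - Real.log x ≠ 0 from hd1.ne']
      ring
    have hgc' := hgc x hx y hy ν ⟨hν0, hν1⟩
    rw [hcomb] at hgc'
    have h5 : φ t = f x ^ ν * f y ^ (1 - ν) := by
      rw [Real.rpow_def_of_pos hfx, Real.rpow_def_of_pos hfy, ← Real.exp_add,
        ← Real.exp_log (hφpos t ht0), hlogφ t ht0]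
      congr 1
      rw [hk, hν, hX, hY, hlx, hly, hlt']
      field_simp [show Real.log y - Real.log x ≠ 0 from hd1.ne']
      ring
    rw [h5]
    exact hgc'
  -- main case split
  have hax : a < x := hx.1
  have hIxy : IntervalIntegrable f MeasureTheory.volume x y :=
    (hint x hx).symm.trans (hint y hy)
  have hnn_ax : 0 ≤ ∫ t in a..x, f t := by
    rw [intervalIntegral.integral_of_le hax.le, MeasureTheory.integral_Ioc_eq_integral_Ioo]
    exact MeasureTheory.setIntegral_nonneg measurableSet_Ioo
      (fun t ht => (hpos t ⟨ht.1, ht.2.trans hx.2⟩).le)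
  have hnn_xy : 0 ≤ ∫ t in x..y, f t := by
    rw [intervalIntegral.integral_of_le hxy.le, MeasureTheory.integral_Ioc_eq_integral_Ioo]
    exact MeasureTheory.setIntegral_nonneg measurableSet_Ioo
      (fun t ht => (hpos t ⟨hx.1.trans ht.1, ht.2.trans hy.2⟩).le)
  have hhy : (∫ t in a..y, f t) = (∫ t in a..x, f t) + ∫ t in x..y, f t :=
    (intervalIntegral.integral_add_adjacent_intervals (hint x hx) hIxy).symm
  by_cases hcase : y * f y ≤ x * f x
  · calc y * f y * (∫ t in a..x, f t) ≤ x * f x * (∫ t in a..x, f t) :=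
        mul_le_mul_of_nonneg_right hcase hnn_ax
      _ ≤ x * f x * (∫ t in a..y, f t) := by
        apply mul_le_mul_of_nonneg_left _ (by positivity)
        rw [hhy]; linarith
  · push_neg at hcase
    -- x * f x < y * f y, deduce k < 1
    have hxφ : x * φ x = C * x ^ (-k + 1) := by
      rw [hφ]
      simp only
      rw [Real.rpow_add hx0, Real.rpow_one]
      ring
    have hyφ : y * φ y = C * y ^ (-k + 1) := by
      rw [hφ]
      simp only
      rw [Real.rpow_add hy0, Real.rpow_one]
      ring
    have hk1 : k < 1 := by
      by_contra hk1
      push_neg at hk1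
      have h6 : y ^ (-k + 1) ≤ x ^ (-k + 1) :=
        Real.rpow_le_rpow_of_nonpos hx0 hxy.le (by linarith)
      have h7 : y * f y ≤ x * f x := by
        rw [← hφx, ← hφy, hxφ, hyφ]
        exact mul_le_mul_of_nonneg_left h6 hCpos.le
      linarith
    have hrexp : (-1:ℝ) < -k := by linarith
    have hIφ : ∀ u v : ℝ, IntervalIntegrable φ MeasureTheory.volume u v := fun u v =>
      (intervalIntegral.intervalIntegrable_rpow' hrexp).const_mul C
    have hfi_ax : MeasureTheory.IntegrableOn f (Set.Ioo a x) :=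
      ((hint x hx).1).mono_set Set.Ioo_subset_Ioc_self
    have hφi_ax : MeasureTheory.IntegrableOn φ (Set.Ioo a x) :=
      ((hIφ a x).1).mono_set Set.Ioo_subset_Ioc_self
    have hfi_xy : MeasureTheory.IntegrableOn f (Set.Ioo x y) :=
      (hIxy.1).mono_set Set.Ioo_subset_Ioc_self
    have hφi_xy : MeasureTheory.IntegrableOn φ (Set.Ioo x y) :=
      ((hIφ x y).1).mono_set Set.Ioo_subset_Ioc_self
    have hcomp1 : (∫ t in a..x, f t) ≤ ∫ t in a..x, φ t := by
      rw [intervalIntegral.integral_of_le hax.le, intervalIntegral.integral_of_le hax.le,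
        MeasureTheory.integral_Ioc_eq_integral_Ioo, MeasureTheory.integral_Ioc_eq_integral_Ioo]
      exact MeasureTheory.setIntegral_mono_on hfi_ax hφi_ax measurableSet_Ioo bound1
    have hcomp2 : (∫ t in x..y, φ t) ≤ ∫ t in x..y, f t := by
      rw [intervalIntegral.integral_of_le hxy.le, intervalIntegral.integral_of_le hxy.le,
        MeasureTheory.integral_Ioc_eq_integral_Ioo, MeasureTheory.integral_Ioc_eq_integral_Ioo]
      exact MeasureTheory.setIntegral_mono_on hφi_xy hfi_xy measurableSet_Ioo bound2
    have hφadd : (∫ t in a..y, φ t) = (∫ t in a..x, φ t) + ∫ t in x..y, φ t :=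
      (intervalIntegral.integral_add_adjacent_intervals (hIφ a x) (hIφ x y)).symm
    have hHx : (∫ t in a..x, φ t) = C * ((x ^ (-k + 1) - a ^ (-k + 1)) / (-k + 1)) := by
      rw [hφ]
      simp only
      rw [intervalIntegral.integral_const_mul, integral_rpow (Or.inl hrexp)]
    have hHy : (∫ t in a..y, φ t) = C * ((y ^ (-k + 1) - a ^ (-k + 1)) / (-k + 1)) := by
      rw [hφ]
      simp only
      rw [intervalIntegral.integral_const_mul, integral_rpow (Or.inl hrexp)]
    set e := -k + 1 with he
    have he0 : (0:ℝ) < e := by linarith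
    have h6 : x ^ e ≤ y ^ e := Real.rpow_le_rpow hx0.le hxy.le he0.le
    have h7 : (0:ℝ) ≤ a ^ e := Real.rpow_nonneg ha e
    have h8 : y ^ e * (x ^ e - a ^ e) ≤ x ^ e * (y ^ e - a ^ e) := by
      nlinarith [mul_le_mul_of_nonneg_left h6 h7]
    have hpow : y * φ y * (∫ t in a..x, φ t) ≤ x * φ x * (∫ t in a..y, φ t) := by
      rw [hxφ, hyφ, hHx, hHy]
      calc C * y ^ e * (C * ((x ^ e - a ^ e) / e))
          = (C * C / e) * (y ^ e * (x ^ e - a ^ e)) := by ring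
        _ ≤ (C * C / e) * (x ^ e * (y ^ e - a ^ e)) :=
            mul_le_mul_of_nonneg_left h8 (by positivity)
        _ = C * x ^ e * (C * ((y ^ e - a ^ e) / e)) := by ring
    rw [hφx, hφy, hφadd] at hpow
    -- chain
    have step1 : (y * f y - x * f x) * (∫ t in a..x, f t)
        ≤ (y * f y - x * f x) * (∫ t in a..x, φ t) :=
      mul_le_mul_of_nonneg_left hcomp1 (by linarith)
    have step3 : x * f x * (∫ t in x..y, φ t) ≤ x * f x * (∫ t in x..y, f t) :=
      mul_le_mul_of_nonneg_left hcomp2 (by positivity)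
    rw [hhy]
    linarith [step1, step3, hpow]

theorem integral_geom_concave (a b : ℝ) (ha : 0 ≤ a) (hab : a < b) (f : ℝ → ℝ)
    (hcont : ContinuousOn f (Set.Ioo a b))
    (hpos : ∀ x ∈ Set.Ioo a b, 0 < f x)
    (hint : ∀ x ∈ Set.Ioo a b, IntervalIntegrable f MeasureTheory.volume a x)
    (hgc : ∀ x ∈ Set.Ioo a b, ∀ y ∈ Set.Ioo a b, ∀ l ∈ Set.Icc (0:ℝ) 1,
      f (x ^ l * y ^ (1 - l)) ≥ f x ^ l * f y ^ (1 - l)) :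
    ∀ x ∈ Set.Ioo a b, ∀ y ∈ Set.Ioo a b, ∀ l ∈ Set.Icc (0:ℝ) 1,
      (∫ t in a..(x ^ l * y ^ (1 - l)), f t)
        ≥ (∫ t in a..x, f t) ^ l * (∫ t in a..y, f t) ^ (1 - l) := by
  have hpos' : ∀ u ∈ Set.Ioo a b, 0 < ∫ t in a..u, f t := fun u hu =>
    intervalIntegral.intervalIntegral_pos_of_pos_on (hint u hu)
      (fun t ht => hpos t ⟨ht.1, ht.2.trans hu.2⟩) hu.1
  set D : Set ℝ := Real.exp ⁻¹' (Set.Ioo a b) with hD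
  have hD_open : IsOpen D := isOpen_Ioo.preimage Real.continuous_exp
  have hD_convex : Convex ℝ D :=
    ((Set.ordConnected_Ioo).preimage_mono Real.exp_monotone).convex
  set g : ℝ → ℝ := fun u => Real.log (∫ t in a..(Real.exp u), f t) with hg
  have hderiv : ∀ u ∈ D, HasDerivAt g
      ((∫ t in a..(Real.exp u), f t)⁻¹ * (f (Real.exp u) * Real.exp u)) u := by
    intro u hu
    have hxu : Real.exp u ∈ Set.Ioo a b := hu
    have hmem : Set.Ioo a b ∈ nhds (Real.exp u) := Ioo_mem_nhds hxu.1 hxu.2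
    have hFTC : HasDerivAt (fun v => ∫ t in a..v, f t) (f (Real.exp u)) (Real.exp u) :=
      intervalIntegral.integral_hasDerivAt_right (hint _ hxu)
        ⟨Set.Ioo a b, hmem, (hcont.aestronglyMeasurable measurableSet_Ioo)⟩
        (hcont.continuousAt hmem)
    have h1 : HasDerivAt (fun v => ∫ t in a..(Real.exp v), f t)
        (f (Real.exp u) * Real.exp u) u := hFTC.comp u (Real.hasDerivAt_exp u)
    exact (Real.hasDerivAt_log (hpos' _ hxu).ne').comp u h1
  have hconc : ConcaveOn ℝ D g := by
    apply AntitoneOn.concaveOn_of_deriv hD_convex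
    · exact fun u hu => ((hderiv u hu).differentiableAt.continuousAt).continuousWithinAt
    · rw [hD_open.interior_eq]
      exact fun u hu => ((hderiv u hu).differentiableAt).differentiableWithinAt
    · rw [hD_open.interior_eq]
      intro u hu v hv huv
      rw [(hderiv u hu).deriv, (hderiv v hv).deriv]
      have hpq : Real.exp u ≤ Real.exp v := Real.exp_le_exp.mpr huv
      rcases eq_or_lt_of_le hpq with heq | hlt
      · rw [heq]
      · have hkey := geom_key a b ha f hpos hint hgc hu hv hlt
        rw [inv_mul_eq_div, inv_mul_eq_div, div_le_div_iff₀ (hpos' _ hv) (hpos' _ hu)]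
        calc f (Real.exp v) * Real.exp v * (∫ t in a..(Real.exp u), f t)
            = Real.exp v * f (Real.exp v) * (∫ t in a..(Real.exp u), f t) := by ring
          _ ≤ Real.exp u * f (Real.exp u) * (∫ t in a..(Real.exp v), f t) := hkey
          _ = f (Real.exp u) * Real.exp u * (∫ t in a..(Real.exp v), f t) := by ring
  intro x hx y hy l hl
  have hx0 : 0 < x := lt_of_le_of_lt ha hx.1
  have hy0 : 0 < y := lt_of_le_of_lt ha hy.1
  have hxD : Real.log x ∈ D := by
    simp only [hD, Set.mem_preimage, Real.exp_log hx0]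
    exact hx
  have hyD : Real.log y ∈ D := by
    simp only [hD, Set.mem_preimage, Real.exp_log hy0]
    exact hy
  have hl1 : 0 ≤ 1 - l := by linarith [hl.2]
  have hzexp : Real.exp (l * Real.log x + (1 - l) * Real.log y) = x ^ l * y ^ (1 - l) := by
    rw [Real.rpow_def_of_pos hx0, Real.rpow_def_of_pos hy0, ← Real.exp_add]
    congr 1
    ring
  have hzD : (l * Real.log x + (1 - l) * Real.log y) ∈ D := by
    have := hD_convex hxD hyD hl.1 hl1 (by ring)
    simpa [smul_eq_mul] using this
  have hzmem : x ^ l * y ^ (1 - l) ∈ Set.Ioo a b := by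
    have : Real.exp (l * Real.log x + (1 - l) * Real.log y) ∈ Set.Ioo a b := hzD
    rwa [hzexp] at this
  have hcombo := hconc.2 hxD hyD hl.1 hl1 (by ring)
  simp only [smul_eq_mul, hg] at hcombo
  rw [Real.exp_log hx0, Real.exp_log hy0, hzexp] at hcombo
  have hhx : 0 < ∫ t in a..x, f t := hpos' x hx
  have hhy : 0 < ∫ t in a..y, f t := hpos' y hy
  have hhz : 0 < ∫ t in a..(x ^ l * y ^ (1 - l)), f t := hpos' _ hzmem
  calc (∫ t in a..x, f t) ^ l * (∫ t in a..y, f t) ^ (1 - l)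
      = Real.exp (l * Real.log (∫ t in a..x, f t)
          + (1 - l) * Real.log (∫ t in a..y, f t)) := by
        rw [Real.rpow_def_of_pos hhx, Real.rpow_def_of_pos hhy, ← Real.exp_add]
        congr 1
        ring
    _ ≤ Real.exp (Real.log (∫ t in a..(x ^ l * y ^ (1 - l)), f t)) :=
        Real.exp_le_exp.mpr hcombo
    _ = ∫ t in a..(x ^ l * y ^ (1 - l)), f t := Real.exp_log hhz
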